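/- Let E be a real normed vector space and let f : E → ℝ be differentiable with Fréchet derivative f′. Suppose f(x) ≥ 0 for all x ∈ E and f′ is β-Lipschitz for some β > 0, i.e. ‖f′(x) − f′(y)‖ ≤ β‖x − y‖ in the operator norm for all x, y ∈ E. Then for every x ∈ E, ‖f′(x)‖² ≤ 4β f(x). -/

import Mathlib

open Set

lemma descent_aux
    {E : Type*} [NormedAddCommGroup E] [NormedSpace ℝ E]
    (f : E → ℝ) (f' : E → E →L[ℝ] ℝ) (β : ℝ) (hβ : 0 < β)
    (hderiv : ∀ x, HasFDerivAt f (f' x) x)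
    (hlip : ∀ x y, ‖f' x - f' y‖ ≤ β * ‖x - y‖) (x v : E) :
    f (x + v) ≤ f x + f' x v + β * ‖v‖ ^ 2 := by
  set g : ℝ → ℝ := fun t => f (x + t • v) with hg
  have hgd : ∀ t : ℝ, HasDerivAt g (f' (x + t • v) v) t := by
    intro t
    have h1 : HasDerivAt (fun t : ℝ => x + t • v) v t := by
      simpa using ((hasDerivAt_id t).smul_const v).const_add x
    exact (hderiv (x + t • v)).comp_hasDerivAt t h1
  obtain ⟨c, hc, hceq⟩ := exists_hasDerivAt_eq_slope g (fun t => f' (x + t • v) v)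
    (by norm_num : (0:ℝ) < 1)
    (fun t _ => (hgd t).continuousAt.continuousWithinAt)
    (fun t _ => hgd t)
  have hg0 : g 0 = f x := by simp [hg]
  have hg1 : g 1 = f (x + v) := by simp [hg]
  rw [hg0, hg1] at hceq
  have hkey : f (x + v) - f x = f' (x + c • v) v := by
    rw [hceq]; ring
  have hb : |f' (x + c • v) v - f' x v| ≤ β * ‖v‖ ^ 2 := by
    have h1 : f' (x + c • v) v - f' x v = (f' (x + c • v) - f' x) v := by simp
    rw [h1]
    calc |(f' (x + c • v) - f' x) v| ≤ ‖f' (x + c • v) - f' x‖ * ‖v‖ :=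
          (f' (x + c • v) - f' x).le_opNorm v
      _ ≤ (β * ‖x + c • v - x‖) * ‖v‖ := by
          gcongr; exact hlip _ _
      _ ≤ β * ‖v‖ ^ 2 := by
          have : ‖x + c • v - x‖ = c * ‖v‖ := by
            simp [norm_smul, abs_of_pos hc.1]
          rw [this]
          have hc1 : c ≤ 1 := le_of_lt hc.2
          nlinarith [hc1, mul_nonneg hβ.le (sq_nonneg ‖v‖)]
  have := abs_le.mp hb
  linarith [hkey]

theorem self_bounding_of_smooth_nonneg
    {E : Type*} [NormedAddCommGroup E] [NormedSpace ℝ E]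
    (f : E → ℝ) (f' : E → E →L[ℝ] ℝ) (β : ℝ) (hβ : 0 < β)
    (hderiv : ∀ x, HasFDerivAt f (f' x) x)
    (hnonneg : ∀ x, 0 ≤ f x)
    (hlip : ∀ x y, ‖f' x - f' y‖ ≤ β * ‖x - y‖) :
    ∀ x, ‖f' x‖ ^ 2 ≤ 4 * β * f x := by
  intro x
  rcases eq_or_lt_of_le (norm_nonneg (f' x)) with h0 | h0
  · have := hnonneg x
    nlinarith [hβ.le]
  · set N := ‖f' x‖ with hN
    refine le_of_forall_pos_le_add fun ε hε => ?_
    set δ := ε / (2 * N) with hδ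
    have hδpos : 0 < δ := by positivity
    have hlt : N - δ < ‖f' x‖ := by simp [hN]; linarith
    obtain ⟨u, hu1, hu2⟩ := (f' x).exists_lt_apply_of_lt_opNorm hlt
    -- make the value of f' x nonneg by possibly flipping sign
    set w : E := if 0 ≤ f' x u then u else -u with hw
    have hwnorm : ‖w‖ ≤ 1 := by
      rcases le_or_gt 0 (f' x u) with h | h <;>
        simp [hw, h, le_of_lt, not_le.mpr, hu1.le]
    have hwval : N - δ < f' x w := by
      rcases le_or_gt 0 (f' x u) with h | h
      · have : ‖f' x u‖ = f' x u := by simpa [Real.norm_eq_abs] using abs_of_nonneg h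
        simp [hw, h]; rw [← this]; exact hu2
      · have : ‖f' x u‖ = -(f' x u) := by
          simpa [Real.norm_eq_abs] using abs_of_neg h
        simp [hw, not_le.mpr h]
        calc N - δ < ‖f' x u‖ := hu2
          _ = -(f' x u) := this
        -- need f' x (-u) = -(f' x u)
    set t := N / (2 * β) with ht
    have htpos : 0 < t := by positivity
    have hdes := descent_aux f f' β hβ hderiv hlip x (-(t • w))
    have hfe : f' x (-(t • w)) = -(t * f' x w) := by simp [mul_comm]
    have hnn := hnonneg (x + -(t • w))
    have hnw : ‖-(t • w)‖ ^ 2 ≤ t ^ 2 := by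
      rw [norm_neg, norm_smul, Real.norm_eq_abs, abs_of_pos htpos]
      have hw2 : ‖w‖ ^ 2 ≤ 1 := by nlinarith [norm_nonneg w]
      nlinarith [sq_nonneg t, mul_le_mul_of_nonneg_left hw2 (sq_nonneg t)]
    have h1 : t * f' x w ≤ f x + β * t ^ 2 := by
      nlinarith [mul_le_mul_of_nonneg_left hnw hβ.le]
    have h2 : t * (N - δ) ≤ t * f' x w := by nlinarith
    have htN : t * N = N ^ 2 / (2 * β) := by field_simp [ht]; rw [ht]; field_simp
    have hbt2 : β * t ^ 2 = N ^ 2 / (4 * β) := by field_simp [ht]; rw [ht]; field_simp; norm_num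
    have htδ : t * δ = ε / (4 * β) := by
      rw [ht, hδ]; field_simp; ring
    -- so N^2/(2β) - ε/(4β) ≤ f x + N^2/(4β)
    have h3 : N ^ 2 / (2 * β) - ε / (4 * β) ≤ f x + N ^ 2 / (4 * β) := by
      rw [← htN, ← htδ, ← hbt2]; nlinarith
    have h4 : N ^ 2 ≤ 4 * β * f x + ε := by
      have hβ4 : (0:ℝ) < 4 * β := by linarith
      have h5 := mul_le_mul_of_nonneg_left h3 hβ4.le
      have e1 : 4 * β * (N ^ 2 / (2 * β) - ε / (4 * β)) = 2 * N ^ 2 - ε := by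
        field_simp; ring
      have e2 : 4 * β * (f x + N ^ 2 / (4 * β)) = 4 * β * f x + N ^ 2 := by
        field_simp
      rw [e1, e2] at h5
      linarith
    simpa [hN] using h4
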